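/- Let $a>0$, $\nu>0$, $\kappa>2$. Then for all $(r,t)$ with $r>0$ and $t\le 2r$: $\int_{t-2r}^{t}(1+|t-\tau-r|)^{1-\kappa}\,(1+||t-\tau-r|+\tau|)^{-\nu}\,d\tau \leq C\,(1+||t|-r|)^{-\nu}$, with $C$ depending only on $\nu,\kappa$ (and where $\nu<1$). -/

import Mathlib

open MeasureTheory Real Set intervalIntegral

lemma cont_rpow_abs (p : ℝ) {g : ℝ → ℝ} (hg : Continuous g) :
    Continuous fun u => (1 + |g u|) ^ p :=
  (continuous_const.add hg.abs).rpow_const fun x => Or.inl (by show 1 + |g x| ≠ 0; positivity)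

lemma contOn_rpow (p : ℝ) {s : Set ℝ} (hs : ∀ u ∈ s, -1 < u) :
    ContinuousOn (fun u : ℝ => (1 + u) ^ p) s :=
  (continuousOn_const.add continuousOn_id).rpow_const
    (fun x hx => Or.inl (by simpa using (show (0:ℝ) < 1 + x by linarith [hs x hx]).ne'))

lemma intpow_eq (p : ℝ) (hp : p ≠ -1) {A B : ℝ} (hA : -1 < A) (hB : -1 < B) :
    ∫ u in A..B, (1+u) ^ p = ((1+B)^(p+1) - (1+A)^(p+1))/(p+1) := by
  have hmem : ∀ u ∈ uIcc A B, -1 < u := by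
    intro u hu
    rcases le_total A B with h | h
    · rw [uIcc_of_le h] at hu; exact lt_of_lt_of_le hA hu.1
    · rw [uIcc_of_ge h] at hu; exact lt_of_lt_of_le hB hu.1
  have hint : IntervalIntegrable (fun u : ℝ => (1+u) ^ p) volume A B :=
    (contOn_rpow p hmem).intervalIntegrable
  have hder : ∀ u ∈ uIcc A B,
      HasDerivAt (fun u : ℝ => (1+u)^(p+1)/(p+1)) ((1+u)^p) u := by
    intro u hu
    have hpos : (0:ℝ) < 1 + u := by have := hmem u hu; linarith
    have h1 : HasDerivAt (fun u : ℝ => 1 + u) 1 u := (hasDerivAt_id u).const_add 1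
    have h2 := (h1.rpow_const (p := p+1) (Or.inl hpos.ne')).div_const (p+1)
    have hne : p + 1 ≠ 0 := by intro h; exact hp (by linarith)
    rw [show p + 1 - 1 = p by ring, one_mul, mul_div_cancel_left₀ _ hne] at h2
    exact h2
  rw [integral_eq_sub_of_hasDerivAt hder hint]
  ring

lemma intpow_le_neg (p : ℝ) (hp : p < -1) {A B : ℝ} (hA : 0 ≤ A) (hAB : A ≤ B) :
    ∫ u in A..B, (1+u) ^ p ≤ (1+A)^(p+1) / (-(p+1)) := by
  rw [intpow_eq p (by linarith) (by linarith) (by linarith)]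
  have hc : (0:ℝ) < -(p+1) := by linarith
  have h : ((1+B)^(p+1) - (1+A)^(p+1))/(p+1) = ((1+A)^(p+1) - (1+B)^(p+1))/(-(p+1)) := by
    rw [div_eq_div_iff (show (p:ℝ)+1 ≠ 0 from (show p+1 < 0 by linarith).ne) hc.ne']
    ring
  rw [h]
  have hnum : (1+A)^(p+1) - (1+B)^(p+1) ≤ (1+A)^(p+1) :=
    sub_le_self _ (Real.rpow_nonneg (by linarith) _)
  exact (div_le_div_iff_of_pos_right hc).mpr hnum

lemma intpow_κ (κ : ℝ) (hκ : 2 < κ) {B : ℝ} (hB : 0 ≤ B) :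
    ∫ u in (0:ℝ)..B, (1+u)^(1-κ) ≤ 1/(κ-2) := by
  have h := intpow_le_neg (1-κ) (by linarith) (le_refl (0:ℝ)) hB
  rw [show (1:ℝ)+0 = 1 by norm_num, Real.one_rpow, show -(1-κ+1) = κ-2 by ring] at h
  exact h

lemma intpow_pos (q : ℝ) (hq0 : 0 < q) (hq1 : q < 1) {M : ℝ} (hM : 0 ≤ M) :
    ∫ u in (0:ℝ)..M, (1+u)^(-q) ≤ (1+M)^(1-q)/(1-q) := by
  have h := intpow_eq (-q) (by intro hh; have := neg_inj.mp hh; linarith) (by norm_num : (-1:ℝ) < 0)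
    (by linarith : (-1:ℝ) < M)
  rw [show (1:ℝ)+0 = 1 by norm_num, Real.one_rpow] at h
  rw [h, show -q+1 = 1-q by ring]
  have hc : (0:ℝ) < 1-q := by linarith
  have hnum : (1+M)^(1-q) - 1 ≤ (1+M)^(1-q) := by linarith
  exact (div_le_div_iff_of_pos_right hc).mpr hnum

lemma scale_bound {c x q : ℝ} (hc : 1 ≤ c) (hx : 0 ≤ x) (hq : q ≤ 0) :
    (1 + x/c)^q ≤ c^(-q) * (1+x)^q := by
  have h0 : (0:ℝ) < c := by linarith
  have h1 : (0:ℝ) < 1 + x/c := by positivity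
  have k1 : 1 + x ≤ c * (1 + x/c) := by
    have hcc : c * (1 + x/c) = c + x := by field_simp
    rw [hcc]; linarith
  have k2 : (c*(1+x/c))^q ≤ (1+x)^q :=
    Real.rpow_le_rpow_of_nonpos (by linarith) k1 hq
  rw [Real.mul_rpow h0.le h1.le] at k2
  calc (1+x/c)^q = c^(-q) * (c^q * (1+x/c)^q) := by
        rw [← mul_assoc, ← Real.rpow_add h0]; simp
    _ ≤ c^(-q) * (1+x)^q := mul_le_mul_of_nonneg_left k2 (Real.rpow_nonneg h0.le _)

lemma key2 {ν κ : ℝ} (hν : 0 < ν) (hν1 : ν < 1) (hκ : 2 < κ) (b r : ℝ) (hr : 0 < r) :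
    ∫ u in (0:ℝ)..r, (1+u)^(1-κ) * (1+|2*u+b|)^(-ν) ≤
      (2^ν/(κ-2) + 4^(κ-1)/(1-ν) + 1/(κ-2)) * (1+|b|)^(-ν) := by
  have hκ2 : (0:ℝ) < κ - 2 := by linarith
  have hν2 : (0:ℝ) < 1 - ν := by linarith
  set h : ℝ → ℝ := fun u => (1+u)^(1-κ) * (1+|2*u+b|)^(-ν) with hh
  have hcont2 : Continuous fun u : ℝ => (1+|2*u+b|)^(-ν) :=
    cont_rpow_abs (-ν) (by continuity)
  have hOn : ContinuousOn h (Ici (0:ℝ)) := by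
    exact (contOn_rpow (1-κ) (fun u hu => by simp only [mem_Ici] at hu; linarith)).mul
      hcont2.continuousOn
  have hInt : ∀ {A B : ℝ}, 0 ≤ A → 0 ≤ B → IntervalIntegrable h volume A B := by
    intro A B hA hB
    exact (hOn.mono (fun x hx => le_trans (le_min hA hB) hx.1)).intervalIntegrable
  have hIntPow : ∀ (p : ℝ) {A B : ℝ}, 0 ≤ A → 0 ≤ B →
      IntervalIntegrable (fun u : ℝ => (1+u)^p) volume A B := by
    intro p A B hA hB
    exact ((contOn_rpow p (fun u hu => by
      have : min A B ≤ u := hu.1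
      have : (0:ℝ) ≤ u := le_trans (le_min hA hB) this
      linarith)).intervalIntegrable)
  have hc1 : (0:ℝ) < 2^ν := Real.rpow_pos_of_pos two_pos ν
  have hc4 : (0:ℝ) < 4^(κ-1) := Real.rpow_pos_of_pos (by norm_num) _
  rcases le_or_gt 0 b with hb | hb
  · -- easy case b ≥ 0
    rw [abs_of_nonneg hb]
    have hY : (0:ℝ) ≤ (1+b)^(-ν) := Real.rpow_nonneg (by linarith) _
    have hmono : ∀ u ∈ Icc (0:ℝ) r, h u ≤ (1+u)^(1-κ) * (1+b)^(-ν) := by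
      intro u hu
      have hu0 := hu.1
      have h2 : (1+|2*u+b|)^(-ν) ≤ (1+b)^(-ν) := by
        apply Real.rpow_le_rpow_of_nonpos (by linarith) ?_ (by linarith)
        have := le_abs_self (2*u+b)
        linarith
      exact mul_le_mul_of_nonneg_left h2 (Real.rpow_nonneg (by linarith) _)
    calc ∫ u in (0:ℝ)..r, h u
        ≤ ∫ u in (0:ℝ)..r, (1+u)^(1-κ) * (1+b)^(-ν) := by
          apply integral_mono_on hr.le (hInt le_rfl hr.le) ?_ hmono
          exact (hIntPow (1-κ) le_rfl hr.le).mul_const _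
      _ = (∫ u in (0:ℝ)..r, (1+u)^(1-κ)) * (1+b)^(-ν) := intervalIntegral.integral_mul_const _ _
      _ ≤ (1/(κ-2)) * (1+b)^(-ν) :=
          mul_le_mul_of_nonneg_right (intpow_κ κ hκ hr.le) hY
      _ ≤ (2^ν/(κ-2) + 4^(κ-1)/(1-ν) + 1/(κ-2)) * (1+b)^(-ν) := by
          apply mul_le_mul_of_nonneg_right ?_ hY
          have g1 : (0:ℝ) ≤ 2^ν/(κ-2) := le_of_lt (div_pos hc1 hκ2)
          have g2 : (0:ℝ) ≤ 4^(κ-1)/(1-ν) := le_of_lt (div_pos hc4 hν2)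
          linarith
  · -- b < 0
    rw [abs_of_neg hb]
    have hmb : (0:ℝ) < -b := by linarith
    have hY : (0:ℝ) ≤ (1+-b)^(-ν) := Real.rpow_nonneg (by linarith) _
    set p₁ : ℝ := min (-b/4) r with hp₁
    set p₂ : ℝ := min (-b) r with hp₂
    have h01 : (0:ℝ) ≤ p₁ := le_min (by linarith) hr.le
    have h12 : p₁ ≤ p₂ := min_le_min (by linarith) le_rfl
    have h2r : p₂ ≤ r := min_le_right _ _
    have h02 : (0:ℝ) ≤ p₂ := le_trans h01 h12
    have hsplit : ∫ u in (0:ℝ)..r, h u =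
        (∫ u in (0:ℝ)..p₁, h u) + (∫ u in p₁..p₂, h u) + (∫ u in p₂..r, h u) := by
      rw [integral_add_adjacent_intervals (hInt le_rfl h01) (hInt h01 h02),
          integral_add_adjacent_intervals (hInt le_rfl h02) (hInt h02 hr.le)]
    rw [hsplit]
    -- piece A
    have hA : (∫ u in (0:ℝ)..p₁, h u) ≤ (2^ν/(κ-2)) * (1+-b)^(-ν) := by
      have hmono : ∀ u ∈ Icc (0:ℝ) p₁, h u ≤ (1+u)^(1-κ) * (2^ν * (1+-b)^(-ν)) := by
        intro u hu
        have hu4 : u ≤ -b/4 := le_trans hu.2 (min_le_left _ _)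
        have habs : -b/2 ≤ |2*u+b| := by
          have := neg_le_abs (2*u+b)
          linarith
        have s1 : (1+|2*u+b|)^(-ν) ≤ (1 + (-b)/2)^(-ν) :=
          Real.rpow_le_rpow_of_nonpos (by linarith) (by linarith) (by linarith)
        have s2 : (1 + (-b)/2)^(-ν) ≤ 2^(-(-ν)) * (1+-b)^(-ν) :=
          scale_bound (by norm_num) hmb.le (by linarith)
        rw [neg_neg] at s2
        exact mul_le_mul_of_nonneg_left (s1.trans s2)
          (Real.rpow_nonneg (by linarith [hu.1]) _)
      calc (∫ u in (0:ℝ)..p₁, h u)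
          ≤ ∫ u in (0:ℝ)..p₁, (1+u)^(1-κ) * (2^ν * (1+-b)^(-ν)) := by
            apply integral_mono_on h01 (hInt le_rfl h01) ?_ hmono
            exact (hIntPow (1-κ) le_rfl h01).mul_const _
        _ = (∫ u in (0:ℝ)..p₁, (1+u)^(1-κ)) * (2^ν * (1+-b)^(-ν)) := intervalIntegral.integral_mul_const _ _
        _ ≤ (1/(κ-2)) * (2^ν * (1+-b)^(-ν)) := by
            apply mul_le_mul_of_nonneg_right (intpow_κ κ hκ h01)
            exact mul_nonneg hc1.le hY
        _ = (2^ν/(κ-2)) * (1+-b)^(-ν) := by ring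
    -- piece B
    have hB : (∫ u in p₁..p₂, h u) ≤ (4^(κ-1)/(1-ν)) * (1+-b)^(-ν) := by
      rcases le_or_gt (-b/4) r with h4r | h4r
      · have hp₁e : p₁ = -b/4 := min_eq_left h4r
        have hmono : ∀ u ∈ Icc p₁ p₂,
            h u ≤ (4^(κ-1) * (1+-b)^(1-κ)) * (1+|2*u+b|)^(-ν) := by
          intro u hu
          have hu4 : -b/4 ≤ u := hp₁e ▸ hu.1
          have s1 : (1+u)^(1-κ) ≤ (1 + (-b)/4)^(1-κ) :=
            Real.rpow_le_rpow_of_nonpos (by linarith) (by linarith) (by linarith)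
          have s2 : (1 + (-b)/4)^(1-κ) ≤ 4^(-(1-κ)) * (1+-b)^(1-κ) :=
            scale_bound (by norm_num) hmb.le (by linarith)
          rw [show -(1-κ) = κ-1 by ring] at s2
          exact mul_le_mul_of_nonneg_right (s1.trans s2)
            (Real.rpow_nonneg (by positivity) _)
        have hint2' : IntervalIntegrable (fun u : ℝ => (1+|2*u+b|)^(-ν)) volume p₁ p₂ :=
          hcont2.intervalIntegrable _ _
        have step1 : (∫ u in p₁..p₂, h u) ≤
            (4^(κ-1) * (1+-b)^(1-κ)) * ∫ u in p₁..p₂, (1+|2*u+b|)^(-ν) := by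
          rw [← intervalIntegral.integral_const_mul]
          exact integral_mono_on h12 (hInt h01 h02) (hint2'.const_mul _) hmono
        have step2 : (∫ u in p₁..p₂, (1+|2*u+b|)^(-ν)) ≤
            ∫ u in (0:ℝ)..(-b), (1+|2*u+b|)^(-ν) := by
          apply integral_mono_interval h01 h12 (min_le_left _ _)
            (Filter.Eventually.of_forall fun x => Real.rpow_nonneg (by positivity) _)
            (hcont2.intervalIntegrable _ _)
        have step3 : (∫ u in (0:ℝ)..(-b), (1+|2*u+b|)^(-ν)) ≤ (1+-b)^(1-ν)/(1-ν) := by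
          have comp := integral_comp_mul_add (a := (0:ℝ)) (b := -b)
            (f := fun w : ℝ => (1+|w|)^(-ν)) (c := 2) two_ne_zero b
          rw [show 2*(0:ℝ)+b = b by ring, show 2*(-b)+b = -b by ring] at comp
          rw [show (fun u : ℝ => (1+|2*u+b|)^(-ν)) = fun u : ℝ =>
            (fun w : ℝ => (1+|w|)^(-ν)) (2*u+b) from rfl, comp]
          have hg : Continuous fun w : ℝ => (1+|w|)^(-ν) := cont_rpow_abs (-ν) continuous_id
          have esplit : (∫ w in b..(-b), (1+|w|)^(-ν)) =
              (∫ w in b..(0:ℝ), (1+|w|)^(-ν)) + ∫ w in (0:ℝ)..(-b), (1+|w|)^(-ν) :=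
            (integral_add_adjacent_intervals (hg.intervalIntegrable _ _)
              (hg.intervalIntegrable _ _)).symm
          have eneg : (∫ w in b..(0:ℝ), (1+|w|)^(-ν)) =
              ∫ w in (0:ℝ)..(-b), (1+|w|)^(-ν) := by
            have := integral_comp_neg (a := b) (b := (0:ℝ)) (fun w : ℝ => (1+|w|)^(-ν))
            rw [neg_zero] at this
            rw [← this]
            apply integral_congr
            intro x hx
            simp [abs_neg]
          have epos : (∫ w in (0:ℝ)..(-b), (1+|w|)^(-ν)) =
              ∫ w in (0:ℝ)..(-b), (1+w)^(-ν) := by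
            apply integral_congr
            intro x hx
            rw [uIcc_of_le hmb.le] at hx
            simp only
            rw [abs_of_nonneg hx.1]
          have efin : (∫ w in (0:ℝ)..(-b), (1+w)^(-ν)) ≤ (1+-b)^(1-ν)/(1-ν) :=
            intpow_pos ν hν hν1 hmb.le
          rw [esplit, eneg, epos]
          rw [smul_eq_mul]
          linarith
        have base1 : (1:ℝ) ≤ 1 + -b := by linarith
        have hfactor : (4^(κ-1) * (1+-b)^(1-κ)) * ((1+-b)^(1-ν)/(1-ν)) =
            (4^(κ-1)/(1-ν)) * ((1+-b)^(1-κ) * (1+-b)^(1-ν)) := by ring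
        have hrpadd : (1+-b)^(1-κ) * (1+-b)^(1-ν) = (1+-b)^((1-κ)+(1-ν)) :=
          (Real.rpow_add (by linarith) _ _).symm
        have hexp : (1+-b)^((1-κ)+(1-ν)) ≤ (1+-b)^(-ν) :=
          Real.rpow_le_rpow_of_exponent_le base1 (by linarith)
        calc (∫ u in p₁..p₂, h u)
            ≤ (4^(κ-1) * (1+-b)^(1-κ)) * ∫ u in p₁..p₂, (1+|2*u+b|)^(-ν) := step1
          _ ≤ (4^(κ-1) * (1+-b)^(1-κ)) * ((1+-b)^(1-ν)/(1-ν)) := by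
              apply mul_le_mul_of_nonneg_left (step2.trans step3)
              exact mul_nonneg hc4.le (Real.rpow_nonneg (by linarith) _)
          _ = (4^(κ-1)/(1-ν)) * ((1+-b)^((1-κ)+(1-ν))) := by rw [hfactor, hrpadd]
          _ ≤ (4^(κ-1)/(1-ν)) * (1+-b)^(-ν) := by
              apply mul_le_mul_of_nonneg_left hexp (le_of_lt (div_pos hc4 hν2))
      · have hp₁e : p₁ = r := min_eq_right h4r.le
        have hp₂e : p₂ = r := min_eq_right (by linarith)
        rw [hp₁e, hp₂e, integral_same]
        exact mul_nonneg (le_of_lt (div_pos hc4 hν2)) hY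
    -- piece C
    have hC : (∫ u in p₂..r, h u) ≤ (1/(κ-2)) * (1+-b)^(-ν) := by
      rcases le_or_gt (-b) r with hbr | hbr
      · have hp₂e : p₂ = -b := min_eq_left hbr
        rw [hp₂e]
        have hmono : ∀ u ∈ Icc (-b) r, h u ≤ (1+u)^((1-κ)+(-ν)) := by
          intro u hu
          have hub : -b ≤ u := hu.1
          have hu0 : (0:ℝ) ≤ u := le_trans hmb.le hub
          have habs : u ≤ |2*u+b| := by
            have := le_abs_self (2*u+b)
            linarith
          have s1 : (1+|2*u+b|)^(-ν) ≤ (1+u)^(-ν) :=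
            Real.rpow_le_rpow_of_nonpos (by linarith) (by linarith) (by linarith)
          rw [Real.rpow_add (show (0:ℝ) < 1+u by linarith)]
          exact mul_le_mul_of_nonneg_left s1 (Real.rpow_nonneg (by linarith) _)
        have step1 : (∫ u in (-b)..r, h u) ≤ ∫ u in (-b)..r, (1+u)^((1-κ)+(-ν)) :=
          integral_mono_on hbr (hInt hmb.le hr.le) (hIntPow _ hmb.le hr.le) hmono
        have step2 : (∫ u in (-b)..r, (1+u)^((1-κ)+(-ν))) ≤
            (1+-b)^((1-κ)+(-ν)+1) / (-((1-κ)+(-ν)+1)) :=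
          intpow_le_neg _ (by linarith) hmb.le hbr
        have e1 : -((1-κ)+(-ν)+1) = κ+ν-2 := by ring
        have hnum : (1+-b)^((1-κ)+(-ν)+1) ≤ (1+-b)^(-ν) :=
          Real.rpow_le_rpow_of_exponent_le (by linarith) (by linarith)
        have hden : κ-2 ≤ κ+ν-2 := by linarith
        have step3 : (1+-b)^((1-κ)+(-ν)+1) / (-((1-κ)+(-ν)+1)) ≤ (1+-b)^(-ν)/(κ-2) := by
          rw [e1]
          exact div_le_div₀ (Real.rpow_nonneg (by linarith) _) hnum hκ2 hden
        have efin : (1+-b)^(-ν)/(κ-2) = (1/(κ-2)) * (1+-b)^(-ν) := by ring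
        linarith [step1.trans (step2.trans step3)]
      · have hp₂e : p₂ = r := min_eq_right hbr.le
        rw [hp₂e, integral_same]
        exact mul_nonneg (le_of_lt (div_pos one_pos hκ2)) hY
    calc (∫ u in (0:ℝ)..p₁, h u) + (∫ u in p₁..p₂, h u) + (∫ u in p₂..r, h u)
        ≤ (2^ν/(κ-2)) * (1+-b)^(-ν) + (4^(κ-1)/(1-ν)) * (1+-b)^(-ν)
          + (1/(κ-2)) * (1+-b)^(-ν) := by linarith
      _ = (2^ν/(κ-2) + 4^(κ-1)/(1-ν) + 1/(κ-2)) * (1+-b)^(-ν) := by ring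

theorem stmt_12 (a ν κ : ℝ) (ha : 0 < a) (hν : 0 < ν) (hν1 : ν < 1) (hκ : 2 < κ) :
    ∃ C : ℝ, 0 < C ∧ ∀ r t : ℝ, 0 < r → t ≤ 2 * r →
      (∫ τ in (t - 2 * r)..t,
        (1 + |t - τ - r|) ^ (1 - κ) * (1 + |(|t - τ - r| + τ)|) ^ (-ν)) ≤
        C * (1 + |(|t| - r)|) ^ (-ν) := by
  have hκ2 : (0:ℝ) < κ - 2 := by linarith
  have hν2 : (0:ℝ) < 1 - ν := by linarith
  have hc1 : (0:ℝ) < 2^ν := Real.rpow_pos_of_pos two_pos ν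
  have hc4 : (0:ℝ) < 4^(κ-1) := Real.rpow_pos_of_pos (by norm_num) _
  set C₂ : ℝ := 2^ν/(κ-2) + 4^(κ-1)/(1-ν) + 1/(κ-2) with hC₂
  have hC₂pos : 0 < C₂ := by
    have g1 : (0:ℝ) < 2^ν/(κ-2) := div_pos hc1 hκ2
    have g2 : (0:ℝ) < 4^(κ-1)/(1-ν) := div_pos hc4 hν2
    have g3 : (0:ℝ) < 1/(κ-2) := div_pos one_pos hκ2
    have := hC₂ ▸ (by linarith : (0:ℝ) < 2^ν/(κ-2) + 4^(κ-1)/(1-ν) + 1/(κ-2))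
    linarith [this]
  refine ⟨1/(κ-2) + C₂, by positivity, ?_⟩
  intro r t hr htr
  set F : ℝ → ℝ := fun τ =>
    (1 + |t - τ - r|) ^ (1 - κ) * (1 + |(|t - τ - r| + τ)|) ^ (-ν) with hF
  have hcontF : Continuous F := by
    apply Continuous.mul
    · exact cont_rpow_abs (1-κ) (by continuity)
    · apply cont_rpow_abs (-ν)
      exact ((by continuity : Continuous fun τ : ℝ => t - τ - r).abs.add continuous_id)
  have hsplit : (∫ τ in (t-2*r)..t, F τ) =
      (∫ τ in (t-2*r)..(t-r), F τ) + ∫ τ in (t-r)..t, F τ :=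
    (integral_add_adjacent_intervals (hcontF.intervalIntegrable _ _)
      (hcontF.intervalIntegrable _ _)).symm
  -- piece 1
  have e1 : (∫ τ in (t-2*r)..(t-r), F τ) =
      (∫ τ in (t-2*r)..(t-r), (1+(t-r-τ))^(1-κ)) * (1+|t-r|)^(-ν) := by
    rw [← intervalIntegral.integral_mul_const]
    apply integral_congr
    intro x hx
    rw [uIcc_of_le (by linarith)] at hx
    have h1 : 0 ≤ t - x - r := by linarith [hx.2]
    show (1 + |t - x - r|) ^ (1 - κ) * (1 + |(|t - x - r| + x)|) ^ (-ν)
        = (1+(t-r-x))^(1-κ) * (1+|t-r|)^(-ν)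
    rw [abs_of_nonneg h1, show t - x - r + x = t - r by ring,
      show t - x - r = t - r - x by ring]
  have e1' : (∫ τ in (t-2*r)..(t-r), (1+(t-r-τ))^(1-κ)) =
      ∫ u in (0:ℝ)..r, (1+u)^(1-κ) := by
    have comp := integral_comp_sub_left (a := t-2*r) (b := t-r)
      (fun u : ℝ => (1+u)^(1-κ)) (t-r)
    rw [show t-r-(t-r) = (0:ℝ) by ring, show t-r-(t-2*r) = r by ring] at comp
    exact comp
  have hI1 : (∫ τ in (t-2*r)..(t-r), F τ) ≤ (1/(κ-2)) * (1+|t-r|)^(-ν) := by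
    rw [e1, e1']
    exact mul_le_mul_of_nonneg_right (intpow_κ κ hκ hr.le)
      (Real.rpow_nonneg (by positivity) _)
  -- piece 2
  have e2 : (∫ τ in (t-r)..t, F τ) =
      ∫ u in (0:ℝ)..r, (1+u)^(1-κ) * (1+|2*u+(t-r)|)^(-ν) := by
    have ec : EqOn F
        (fun τ => (fun u : ℝ => (1+u)^(1-κ) * (1+|2*u+(t-r)|)^(-ν)) (τ - (t-r)))
        (uIcc (t-r) t) := by
      intro x hx
      rw [uIcc_of_le (by linarith)] at hx
      have h1 : t - x - r ≤ 0 := by linarith [hx.1]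
      show (1 + |t - x - r|) ^ (1 - κ) * (1 + |(|t - x - r| + x)|) ^ (-ν)
          = (1+(x-(t-r)))^(1-κ) * (1+|2*(x-(t-r))+(t-r)|)^(-ν)
      rw [abs_of_nonpos h1, show -(t - x - r) + x = 2*(x-(t-r))+(t-r) by ring,
        show -(t - x - r) = x-(t-r) by ring]
    rw [integral_congr ec,
      integral_comp_sub_right (fun u : ℝ => (1+u)^(1-κ) * (1+|2*u+(t-r)|)^(-ν)) (t-r),
      show t-r-(t-r) = (0:ℝ) by ring, show t-(t-r) = r by ring]
  have hI2 : (∫ τ in (t-r)..t, F τ) ≤ C₂ * (1+|t-r|)^(-ν) := by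
    rw [e2]
    exact key2 hν hν1 hκ (t-r) r hr
  -- combine
  have hfin : (1+|t-r|)^(-ν) ≤ (1+|(|t|-r)|)^(-ν) := by
    apply Real.rpow_le_rpow_of_nonpos (by positivity) ?_ (by linarith)
    have h := abs_abs_sub_abs_le_abs_sub t r
    rw [abs_of_pos hr] at h
    linarith
  calc (∫ τ in (t-2*r)..t, F τ)
      = (∫ τ in (t-2*r)..(t-r), F τ) + ∫ τ in (t-r)..t, F τ := hsplit
    _ ≤ (1/(κ-2)) * (1+|t-r|)^(-ν) + C₂ * (1+|t-r|)^(-ν) := add_le_add hI1 hI2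
    _ = (1/(κ-2) + C₂) * (1+|t-r|)^(-ν) := by ring
    _ ≤ (1/(κ-2) + C₂) * (1+|(|t|-r)|)^(-ν) := by
        apply mul_le_mul_of_nonneg_left hfin
        positivity
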